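/- Let U be a finite set, F = (S_1, …, S_m) a family of subsets of U, and G(U,F) the associated split graph. If H ⊆ U is nonempty and satisfies H ∩ S_j ≠ ∅ for every j ∈ [m], then the function f on the vertices of G(U,F) defined by f(v) = 2 for v ∈ H and f(v) = 0 otherwise is a Roman dominating function on G(U,F) of weight 2|H|. -/

import Mathlib

/-- Adjacency of the split graph `G(U,F)`: the universe `α` forms a clique, each set
`S_j` has two corresponding set-vertices `s_j^1, s_j^2` (encoded as `(j, i) : Fin m × Fin 2`),
and `u ∈ α` is adjacent to `s_j^i` iff `u ∈ S_j`; the set-vertices are pairwise non-adjacent. -/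
def splitAdj {α : Type*} {m : ℕ} (F : Fin m → Finset α) :
    (α ⊕ Fin m × Fin 2) → (α ⊕ Fin m × Fin 2) → Prop
  | .inl u, .inl v => u ≠ v
  | .inl u, .inr p => u ∈ F p.1
  | .inr p, .inl u => u ∈ F p.1
  | .inr _, .inr _ => False

/-- The split graph `G(U,F)`. -/
def splitGraph {α : Type*} {m : ℕ} (F : Fin m → Finset α) :
    SimpleGraph (α ⊕ Fin m × Fin 2) where
  Adj := splitAdj F
  symm := ⟨by rintro (u|p) (v|q) h <;> simp_all [splitAdj]; exact Ne.symm h⟩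
  loopless := ⟨by rintro (u|p) h <;> simp_all [splitAdj]⟩


/-- If `H ⊆ U` is a nonempty hitting set of `(U,F)`, then the function
assigning `2` to the vertices of `H` and `0` to every other vertex is a Roman
dominating function on the split graph `G(U,F)` of weight `2|H|`. -/
theorem splitGraph_hitting_set_gives_rdf
    {α : Type*} [Fintype α] [DecidableEq α] {m : ℕ} (F : Fin m → Finset α)
    (H : Finset α) (hHne : H.Nonempty)
    (hhit : ∀ j : Fin m, ∃ u ∈ H, u ∈ F j)
    (f : (α ⊕ Fin m × Fin 2) → ℕ)
    (hf : ∀ x, f x = match x with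
      | Sum.inl u => if u ∈ H then 2 else 0
      | Sum.inr _ => 0) :
    (∀ x, f x ≤ 2) ∧
    (∀ x, f x = 0 → ∃ y, (splitGraph F).Adj x y ∧ f y = 2) ∧
    (∑ x, f x) = 2 * H.card := by
  obtain ⟨u0, hu0⟩ := hHne
  refine ⟨?_, ?_, ?_⟩
  · rintro (u|p) <;> rw [hf] <;> simp <;> split <;> simp
  · rintro (u|p) h0
    · rw [hf] at h0
      simp only at h0
      have hu : u ∉ H := by intro h; simp [h] at h0
      refine ⟨Sum.inl u0, ?_, by rw [hf]; simp [hu0]⟩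
      exact fun h => hu (h ▸ hu0)
    · obtain ⟨v, hvH, hvF⟩ := hhit p.1
      refine ⟨Sum.inl v, hvF, by rw [hf]; simp [hvH]⟩
  · rw [Fintype.sum_congr f _ hf]
    rw [Fintype.sum_sum_type]
    simp [Finset.sum_ite_mem, Finset.univ_inter, Finset.sum_const, mul_comm]
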